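/- Suppose a > 0, d > 0, b > 0, and x′(t) ≤ x(t)(b − a·x(t − τ(t))) + d for all t ≥ t₀. Then limsup_{t→+∞} x(t) ≤ −d/b + (d/b + x̄)·e^{b·τ̄}, where x̄ = (b + √(b² + 4ad))/(2a) is the unique positive root of x(ax − b) − d = 0. (Continuous-time case of Lemma 2.15(i).) -/

import Mathlib

open Filter

set_option maxHeartbeats 1000000

section helpers

private lemma antitone_aux (x x' : ℝ → ℝ) (p q : ℝ)
    (hderiv : ∀ u ∈ Set.Icc p q, HasDerivAt x (x' u) u)
    (hbound : ∀ u ∈ Set.Ioo p q, x' u ≤ 0) :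
    AntitoneOn x (Set.Icc p q) := by
  refine antitoneOn_of_deriv_nonpos (convex_Icc p q)
    (fun u hu => (hderiv u hu).continuousAt.continuousWithinAt)
    (fun u hu => ?_) (fun u hu => ?_)
  · rw [interior_Icc] at hu
    exact (hderiv u (Set.Ioo_subset_Icc_self hu)).differentiableAt.differentiableWithinAt
  · rw [interior_Icc] at hu
    rw [(hderiv u (Set.Ioo_subset_Icc_self hu)).deriv]
    exact hbound u hu

private lemma gronwall_aux (b d : ℝ) (hb : 0 < b) (x x' : ℝ → ℝ) (p q : ℝ) (hpq : p ≤ q)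
    (hderiv : ∀ u ∈ Set.Icc p q, HasDerivAt x (x' u) u)
    (hbound : ∀ u ∈ Set.Icc p q, x' u ≤ b * x u + d) :
    x q ≤ (x p + d / b) * Real.exp (b * (q - p)) - d / b := by
  set g : ℝ → ℝ := fun u => (x u + d / b) * Real.exp (-(b * u)) with hg
  have hgd : ∀ u ∈ Set.Icc p q,
      HasDerivAt g ((x' u - (b * x u + d)) * Real.exp (-(b * u))) u := by
    intro u hu
    have h1 : HasDerivAt (fun u : ℝ => -(b * u)) (-b) u := by
      exact (((hasDerivAt_id' u).const_mul b).neg).congr_deriv (by ring)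
    have h2 := h1.exp
    have h3 := ((hderiv u hu).add_const (d / b)).mul h2
    refine h3.congr_deriv ?_
    have hbb : (x u + d / b) * b = b * x u + d := by rw [add_mul, div_mul_cancel₀ d hb.ne']; ring
    linear_combination (-Real.exp (-(b * u))) * hbb
  have hanti : AntitoneOn g (Set.Icc p q) := by
    refine antitone_aux g (fun u => (x' u - (b * x u + d)) * Real.exp (-(b * u))) p q hgd
      (fun u hu => ?_)
    have hu' := Set.Ioo_subset_Icc_self hu
    have := hbound u hu'
    have : x' u - (b * x u + d) ≤ 0 := by linarith
    exact mul_nonpos_of_nonpos_of_nonneg this (Real.exp_nonneg _)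
  have hgq : g q ≤ g p := hanti (Set.left_mem_Icc.2 hpq) (Set.right_mem_Icc.2 hpq) hpq
  have hexp : Real.exp (-(b * q)) * Real.exp (b * q) = 1 := by
    rw [← Real.exp_add]; simp
  have h4 : (x q + d / b) * Real.exp (-(b * q)) * Real.exp (b * q)
      ≤ (x p + d / b) * Real.exp (-(b * p)) * Real.exp (b * q) :=
    mul_le_mul_of_nonneg_right hgq (Real.exp_nonneg _)
  rw [mul_assoc, hexp, mul_one] at h4
  have h5 : Real.exp (-(b * p)) * Real.exp (b * q) = Real.exp (b * (q - p)) := by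
    rw [← Real.exp_add]; ring_nf
  rw [mul_assoc, h5] at h4
  linarith

private lemma decrease_aux (x x' : ℝ → ℝ) (c p q : ℝ) (hpq : p ≤ q)
    (hderiv : ∀ u ∈ Set.Icc p q, HasDerivAt x (x' u) u)
    (hbound : ∀ u ∈ Set.Icc p q, x' u ≤ -c) :
    x q ≤ x p - c * (q - p) := by
  set g : ℝ → ℝ := fun u => x u + c * u with hg
  have hanti : AntitoneOn g (Set.Icc p q) := by
    refine antitone_aux g (fun u => x' u + c) p q
      (fun u hu => by exact ((hderiv u hu).add ((hasDerivAt_id' u).const_mul c)).congr_deriv (by ring))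
      (fun u hu => by have := hbound u (Set.Ioo_subset_Icc_self hu); simp; linarith)
  have := hanti (Set.left_mem_Icc.2 hpq) (Set.right_mem_Icc.2 hpq) hpq
  simp only [hg] at this
  linarith
end helpers

theorem limsup_le_of_delay_ineq_explicit_continuous
    (a b d t₀ τbar : ℝ) (τ x x' : ℝ → ℝ)
    (ha : 0 < a) (hd : 0 < d) (hb : 0 < b) (hτbar : 0 ≤ τbar)
    (hτcont : Continuous τ) (hτ : ∀ t : ℝ, 0 ≤ τ t ∧ τ t ≤ τbar)
    (hxcont : ContinuousOn x (Set.Ici (t₀ - τbar)))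
    (hxpos : ∀ t : ℝ, t₀ - τbar ≤ t → 0 < x t)
    (hderiv : ∀ t : ℝ, t₀ ≤ t → HasDerivAt x (x' t) t)
    (hineq : ∀ t : ℝ, t₀ ≤ t → x' t ≤ x t * (b - a * x (t - τ t)) + d) :
    Filter.limsup (fun t : ℝ => ((x t : EReal))) Filter.atTop ≤
      ((-d / b + (d / b + (b + Real.sqrt (b ^ 2 + 4 * a * d)) / (2 * a)) *
        Real.exp (b * τbar) : ℝ) : EReal) := by
  obtain ⟨sq, hsqdef⟩ : ∃ s : ℝ, Real.sqrt (b ^ 2 + 4 * a * d) = s := ⟨_, rfl⟩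
  rw [hsqdef]
  obtain ⟨xbar, hxbardef⟩ : ∃ y : ℝ, (b + sq) / (2 * a) = y := ⟨_, rfl⟩
  rw [hxbardef]
  obtain ⟨M, hMdef⟩ : ∃ m : ℝ, -d / b + (d / b + xbar) * Real.exp (b * τbar) = m := ⟨_, rfl⟩
  rw [hMdef]
  have hsq2 : sq ^ 2 = b ^ 2 + 4 * a * d := by
    rw [← hsqdef]; exact Real.sq_sqrt (by positivity)
  have hsqpos : 0 < sq := by
    rw [← hsqdef]; exact Real.sqrt_pos.2 (by positivity)
  have hbsq : b < sq := by nlinarith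
  have hxbarpos : 0 < xbar := by
    rw [← hxbardef]; positivity
  have h2ax : 2 * a * xbar = b + sq := by
    rw [← hxbardef]; field_simp
  have hroot : xbar * (b - a * xbar) + d = 0 := by
    have : (2 * a) * (xbar * (b - a * xbar) + d) = 0 := by nlinarith [h2ax, hsq2]
    have h2a : (0:ℝ) < 2 * a := by linarith
    nlinarith [this]
  have hbax : b - a * xbar < 0 := by nlinarith [hroot, hxbarpos]
  have hexp1 : (1:ℝ) ≤ Real.exp (b * τbar) := Real.one_le_exp (by positivity)
  have hdb : (0:ℝ) < d / b := div_pos hd hb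
  have hMalt : M = (d / b + xbar) * Real.exp (b * τbar) - d / b := by
    rw [← hMdef]; ring
  have hMxbar : xbar ≤ M := by
    have h0 : (0:ℝ) < d / b + xbar := by linarith
    have h1 := mul_le_mul_of_nonneg_left hexp1 h0.le
    rw [mul_one] at h1
    rw [hMalt]; linarith
  -- basic derivative bounds
  have hbx : ∀ u, t₀ ≤ u → x' u ≤ b * x u + d := by
    intro u hu
    have h1 := hineq u hu
    have h2 : 0 < x (u - τ u) := hxpos _ (by have := (hτ u).2; linarith)
    have h3 : 0 < x u := hxpos _ (by linarith)
    nlinarith [mul_nonneg (mul_nonneg ha.le h2.le) h3.le]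
  have hgron : ∀ p q, t₀ ≤ p → p ≤ q →
      x q ≤ (x p + d / b) * Real.exp (b * (q - p)) - d / b := by
    intro p q hp hpq
    exact gronwall_aux b d hb x x' p q hpq
      (fun u hu => hderiv u (le_trans hp hu.1))
      (fun u hu => hbx u (le_trans hp hu.1))
  have hderneg : ∀ u, t₀ ≤ u → xbar < x u → xbar < x (u - τ u) → x' u ≤ 0 := by
    intro u hu h1 h2
    have h3 := hineq u hu
    have h4 : 0 < x u := hxpos _ (by linarith)
    have p1 : 0 ≤ a * (x u * (x (u - τ u) - xbar)) :=
      mul_nonneg ha.le (mul_nonneg h4.le (by linarith))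
    have p2 : 0 ≤ (x u - xbar) * (a * xbar - b) :=
      mul_nonneg (by linarith) (by linarith)
    nlinarith [h3, hroot, p1, p2]
  have hderquant : ∀ ε : ℝ, 0 < ε → ∀ u, t₀ ≤ u → xbar + ε ≤ x u →
      xbar + ε ≤ x (u - τ u) → x' u ≤ -(ε * (sq + a * ε)) := by
    intro ε hε u hu h1 h2
    have h3 := hineq u hu
    have h4 : 0 < x u := lt_of_lt_of_le (by linarith) h1
    have haε : 0 < a * ε := mul_pos ha hε
    have knp : b - a * (xbar + ε) ≤ 0 := by nlinarith
    have s1 : x u * (b - a * x (u - τ u)) ≤ x u * (b - a * (xbar + ε)) := by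
      have : a * (xbar + ε) ≤ a * x (u - τ u) := mul_le_mul_of_nonneg_left h2 ha.le
      exact mul_le_mul_of_nonneg_left (by linarith) h4.le
    have s2 : x u * (b - a * (xbar + ε)) ≤ (xbar + ε) * (b - a * (xbar + ε)) :=
      mul_le_mul_of_nonpos_right h1 knp
    have s3 : (xbar + ε) * (b - a * (xbar + ε)) + d = -(ε * (sq + a * ε)) := by
      linear_combination hroot - ε * h2ax
    linarith [h3, s1, s2]
  -- the main eventual bound
  have hev : ∀ ε : ℝ, 0 < ε → ∀ᶠ t in atTop, x t ≤ M + ε := by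
    intro ε hε
    by_cases hcase : ∃ T, t₀ ≤ T ∧ ∀ t, T ≤ t → xbar < x t
    · -- eventually above xbar
      obtain ⟨T, hTt₀, hT⟩ := hcase
      have hneg : ∀ u, T + τbar ≤ u → x' u ≤ 0 := by
        intro u hu
        have hu0 : t₀ ≤ u := by linarith
        have h1 : xbar < x u := hT u (by linarith)
        have h2 : xbar < x (u - τ u) := hT _ (by have := (hτ u).2; linarith)
        exact hderneg u hu0 h1 h2
      by_cases h2 : ∃ t2, T + τbar ≤ t2 ∧ x t2 ≤ xbar + ε
      · obtain ⟨t2, ht2, hxt2⟩ := h2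
        filter_upwards [eventually_ge_atTop t2] with t ht
        have hanti : AntitoneOn x (Set.Icc t2 t) := by
          refine antitone_aux x x' t2 t
            (fun u hu => hderiv u (by linarith [hu.1]))
            (fun u hu => hneg u (by linarith [hu.1.le]))
        have := hanti (Set.left_mem_Icc.2 ht) (Set.right_mem_Icc.2 ht) ht
        linarith [hMxbar]
      · push_neg at h2
        exfalso
        obtain ⟨c, hcdef⟩ : ∃ c : ℝ, ε * (sq + a * ε) = c := ⟨_, rfl⟩
        have hc : 0 < c := by
          have h0 : 0 < a * ε := mul_pos ha hε
          rw [← hcdef]; nlinarith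
        obtain ⟨T2, hT2def⟩ : ∃ y : ℝ, T + τbar + τbar = y := ⟨_, rfl⟩
        have hquant : ∀ u, T2 ≤ u → x' u ≤ -c := by
          intro u hu
          rw [← hT2def] at hu
          have hdq := hderquant ε hε
          rw [hcdef] at hdq
          refine hdq u (by linarith) ?_ ?_
          · exact (h2 u (by linarith)).le
          · refine (h2 (u - τ u) ?_).le
            have := (hτ u).2; linarith
        have hT2pos : 0 < x T2 := hxpos _ (by rw [← hT2def]; linarith)
        obtain ⟨q, hqdef⟩ : ∃ y : ℝ, T2 + x T2 / c = y := ⟨_, rfl⟩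
        have hq : T2 ≤ q := by
          have : 0 < x T2 / c := div_pos hT2pos hc
          rw [← hqdef]; linarith
        have hdec := decrease_aux x x' c T2 q hq
          (fun u hu => hderiv u (by have := hu.1; rw [← hT2def] at this; linarith))
          (fun u hu => hquant u hu.1)
        have hqq : c * (q - T2) = x T2 := by
          rw [← hqdef]; field_simp; ring
        have hxq : 0 < x q := by
          refine hxpos _ ?_
          have hT2t₀ : t₀ ≤ T2 := by rw [← hT2def]; linarith
          linarith
        rw [hqq] at hdec
        linarith
    · -- x dips below xbar at arbitrarily large times
      push_neg at hcase
      obtain ⟨t₁, ht₁T, hxt₁⟩ := hcase t₀ le_rfl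
      have ht₁t₀ : t₀ ≤ t₁ := ht₁T
      have hclaim : ∀ t, t₁ ≤ t → x t ≤ M := by
        intro t ht
        by_cases hxt : x t ≤ xbar
        · linarith
        push_neg at hxt
        obtain ⟨S, hSdef⟩ : ∃ S : Set ℝ, {u | u ∈ Set.Icc t₁ t ∧ x u ≤ xbar} = S := ⟨_, rfl⟩
        have hSmem : ∀ u, u ∈ S ↔ (u ∈ Set.Icc t₁ t ∧ x u ≤ xbar) := by
          intro u; rw [← hSdef]; rfl
        have hSne : t₁ ∈ S := (hSmem t₁).2 ⟨⟨le_rfl, ht⟩, hxt₁⟩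
        have hSbdd : BddAbove S := ⟨t, fun u hu => ((hSmem u).1 hu).1.2⟩
        have hScont : ContinuousOn x (Set.Icc t₁ t) := by
          refine hxcont.mono ?_
          intro u hu
          have := hu.1
          simp only [Set.mem_Ici]
          linarith [hu.1]
        have hSclosed : IsClosed S := by
          have : S = Set.Icc t₁ t ∩ x ⁻¹' Set.Iic xbar := by
            ext u; rw [hSmem u]; simp [Set.mem_Icc, and_assoc]
          rw [this]
          exact hScont.preimage_isClosed_of_isClosed isClosed_Icc isClosed_Iic
        obtain ⟨σ, hσdef⟩ : ∃ y : ℝ, sSup S = y := ⟨_, rfl⟩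
        have hσS : σ ∈ S := hσdef ▸ hSclosed.csSup_mem ⟨t₁, hSne⟩ hSbdd
        have hσS' := (hSmem σ).1 hσS
        have hσt₁ : t₁ ≤ σ := hσS'.1.1
        have hσt : σ ≤ t := hσS'.1.2
        have hxσ : x σ ≤ xbar := hσS'.2
        have hσt₀ : t₀ ≤ σ := le_trans ht₁t₀ hσt₁
        have habove : ∀ u, σ < u → u ≤ t → xbar < x u := by
          intro u h1 h2
          by_contra h
          push_neg at h
          have hu : u ∈ S := (hSmem u).2 ⟨⟨le_trans hσt₁ h1.le, h2⟩, h⟩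
          have := hσdef ▸ le_csSup hSbdd hu
          linarith
        have hgronσ : x (min (σ + τbar) t) ≤ M := by
          have hmin : σ ≤ min (σ + τbar) t := le_min (by linarith) hσt
          have h5 := hgron σ (min (σ + τbar) t) hσt₀ hmin
          have hle : min (σ + τbar) t - σ ≤ τbar := by
            have := min_le_left (σ + τbar) t
            linarith
          have e1 : Real.exp (b * (min (σ + τbar) t - σ)) ≤ Real.exp (b * τbar) :=
            Real.exp_le_exp.2 (by nlinarith)
          have hxσpos : 0 < x σ := hxpos _ (by linarith)
          have h6 : (x σ + d / b) * Real.exp (b * (min (σ + τbar) t - σ)) ≤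
              (xbar + d / b) * Real.exp (b * τbar) :=
            mul_le_mul (by linarith) e1 (Real.exp_nonneg _) (by linarith)
          rw [hMalt]; linarith
        by_cases hcase3 : t ≤ σ + τbar
        · rw [min_eq_right hcase3] at hgronσ
          exact hgronσ
        · push_neg at hcase3
          rw [min_eq_left hcase3.le] at hgronσ
          have hanti : AntitoneOn x (Set.Icc (σ + τbar) t) := by
            refine antitone_aux x x' (σ + τbar) t
              (fun u hu => hderiv u (by linarith [hu.1])) (fun u hu => ?_)
            have hu1 : σ + τbar < u := hu.1
            have hu2 : u < t := hu.2
            have h1 : xbar < x u := habove u (by linarith) hu2.le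
            have h2 : xbar < x (u - τ u) := by
              refine habove _ ?_ ?_
              · have := (hτ u).2; linarith
              · have := (hτ u).1; linarith
            exact hderneg u (by linarith) h1 h2
          have := hanti (Set.left_mem_Icc.2 hcase3.le) (Set.right_mem_Icc.2 hcase3.le)
            hcase3.le
          linarith
      filter_upwards [eventually_ge_atTop t₁] with t ht
      linarith [hclaim t ht]
  -- conclude for the limsup
  have hlim : ∀ ε : ℝ, 0 < ε →
      limsup (fun t : ℝ => ((x t : EReal))) atTop ≤ ((M + ε : ℝ) : EReal) := by
    intro ε hε
    refine Filter.limsup_le_of_le ?_ ?_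
    · isBoundedDefault
    · filter_upwards [hev ε hε] with t h
      exact EReal.coe_le_coe_iff.2 h
  refine le_of_forall_gt_imp_ge_of_dense fun c hc => ?_
  induction c with
  | bot => exact absurd hc (by simp)
  | coe r =>
    have hMr : M < r := EReal.coe_lt_coe_iff.1 hc
    have := hlim (r - M) (by linarith)
    have hrw : M + (r - M) = r := by ring
    rwa [hrw] at this
  | top => exact le_top
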